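/- Let n be a positive integer and let f : ℝ^n → ℝ^n be a topical function. Then the sequence k ↦ ⊤(f^k(0)) is subadditive (⊤(f^{k+l}(0)) ≤ ⊤(f^k(0)) + ⊤(f^l(0)) for all k, l), and there exists a real number c such that for every x ∈ ℝ^n the sequence ⊤(f^k(x))/k converges to c as k → ∞. -/

import Mathlib

open Filter

/-- `⊤(x) = max_i x_i`. -/
noncomputable def topV {n : ℕ} (x : Fin n → ℝ) : ℝ := ⨆ i, x i

theorem top_subadditive_and_cycle_time_exists
    (n : ℕ) (hn : 0 < n) (f : (Fin n → ℝ) → (Fin n → ℝ))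
    (htop : ∀ (x : Fin n → ℝ) (h : ℝ), f (fun i => x i + h) = fun i => f x i + h)
    (hmono : Monotone f) :
    (∀ k l : ℕ, topV (f^[k + l] 0) ≤ topV (f^[k] 0) + topV (f^[l] 0)) ∧
    ∃ c : ℝ, ∀ x : Fin n → ℝ,
      Tendsto (fun k : ℕ => topV (f^[k] x) / k) atTop (nhds c) := by
  haveI : Nonempty (Fin n) := ⟨⟨0, hn⟩⟩
  -- basic facts about topV / botV
  set botV : (Fin n → ℝ) → ℝ := fun x => ⨅ i, x i with hbotV
  have hbA : ∀ x : Fin n → ℝ, BddAbove (Set.range x) := fun x => (Set.finite_range x).bddAbove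
  have hbB : ∀ x : Fin n → ℝ, BddBelow (Set.range x) := fun x => (Set.finite_range x).bddBelow
  have hle_top : ∀ (x : Fin n → ℝ) (i : Fin n), x i ≤ topV x := fun x i => le_ciSup (hbA x) i
  have hbot_le : ∀ (x : Fin n → ℝ) (i : Fin n), botV x ≤ x i := fun x i => ciInf_le (hbB x) i
  have htop_mono : ∀ x y : Fin n → ℝ, x ≤ y → topV x ≤ topV y := fun x y h =>
    ciSup_mono (hbA y) h
  have hbot_mono : ∀ x y : Fin n → ℝ, x ≤ y → botV x ≤ botV y := fun x y h =>
    ciInf_mono (hbB x) h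
  have htop_add : ∀ (x : Fin n → ℝ) (h : ℝ), topV (fun i => x i + h) = topV x + h := by
    intro x h
    apply le_antisymm
    · exact ciSup_le fun i => add_le_add_left (hle_top x i) h
    · have : topV x ≤ (⨆ i, x i + h) - h := by
        refine ciSup_le fun i => ?_
        have := le_ciSup (hbA fun i => x i + h) i
        linarith
      exact le_sub_iff_add_le.mp this
  have hbot_add : ∀ (x : Fin n → ℝ) (h : ℝ), botV (fun i => x i + h) = botV x + h := by
    intro x h
    apply le_antisymm
    · have : (⨅ i, x i + h) - h ≤ botV x := by
        refine le_ciInf fun i => ?_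
        have := ciInf_le (hbB fun i => x i + h) i
        linarith
      linarith
    · exact le_ciInf fun i => add_le_add_left (hbot_le x i) h
  -- iterate shift
  have hiter : ∀ (k : ℕ) (x : Fin n → ℝ) (h : ℝ),
      f^[k] (fun i => x i + h) = fun i => f^[k] x i + h := by
    intro k
    induction k with
    | zero => intro x h; simp
    | succ k ih =>
      intro x h
      rw [Function.iterate_succ_apply, htop, ih]
      simp [Function.iterate_succ_apply]
  -- key estimates
  have hkey_le : ∀ (k : ℕ) (x : Fin n → ℝ), f^[k] x ≤ fun i => f^[k] 0 i + topV x := by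
    intro k x
    have h1 : x ≤ fun i => (0 : Fin n → ℝ) i + topV x := by
      intro i; simpa using hle_top x i
    have := hmono.iterate k h1
    rwa [hiter k 0 (topV x)] at this
  have hkey_ge : ∀ (k : ℕ) (x : Fin n → ℝ), (fun i => f^[k] 0 i + botV x) ≤ f^[k] x := by
    intro k x
    have h1 : (fun i => (0 : Fin n → ℝ) i + botV x) ≤ x := by
      intro i; simpa using hbot_le x i
    have := hmono.iterate k h1
    rwa [hiter k 0 (botV x)] at this
  set u : ℕ → ℝ := fun k => topV (f^[k] 0) with hu
  have hu0 : u 0 = 0 := by simp [hu, topV, ciSup_const]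
  -- subadditivity
  have hsub : ∀ k l : ℕ, u (k + l) ≤ u k + u l := by
    intro k l
    have : f^[k + l] 0 = f^[k] (f^[l] 0) := Function.iterate_add_apply f k l 0
    calc u (k + l) = topV (f^[k] (f^[l] 0)) := by simp only [hu]; rw [this]
      _ ≤ topV (fun i => f^[k] 0 i + topV (f^[l] 0)) :=
          htop_mono _ _ (hkey_le k (f^[l] 0))
      _ = u k + u l := htop_add _ _
  refine ⟨hsub, ?_⟩
  -- lower bound: u k ≥ k * b where b = botV (f 0)
  set b : ℝ := botV (f 0) with hb
  have hlow : ∀ k : ℕ, (k : ℝ) * b ≤ botV (f^[k] 0) := by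
    intro k
    induction k with
    | zero => simp [hbotV, ciInf_const]
    | succ k ih =>
      have h1 : (fun i => f^[k] 0 i + b) ≤ f^[k] (f 0) := hkey_ge k (f 0)
      have h2 : botV (fun i => f^[k] 0 i + b) ≤ botV (f^[k] (f 0)) := hbot_mono _ _ h1
      rw [hbot_add] at h2
      have h3 : f^[k + 1] 0 = f^[k] (f 0) := Function.iterate_add_apply f k 1 0
      push_cast
      calc ((k : ℝ) + 1) * b = (k : ℝ) * b + b := by ring
        _ ≤ botV (f^[k] 0) + b := by linarith
        _ ≤ botV (f^[k] (f 0)) := h2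
        _ = botV (f^[k + 1] 0) := by rw [h3]
  have hbot_le_top : ∀ x : Fin n → ℝ, botV x ≤ topV x :=
    fun x => le_trans (hbot_le x ⟨0, hn⟩) (hle_top x ⟨0, hn⟩)
  have hbdd : BddBelow (Set.range fun k : ℕ => u k / k) := by
    refine ⟨min b 0, ?_⟩
    rintro _ ⟨k, rfl⟩
    rcases Nat.eq_zero_or_pos k with rfl | hk
    · simp [hu0]
    · have hkpos : (0 : ℝ) < k := by exact_mod_cast hk
      have : (k : ℝ) * b ≤ u k := le_trans (hlow k) (hbot_le_top _)
      have : b ≤ u k / k := (le_div_iff₀ hkpos).2 (by linarith [mul_comm (k : ℝ) b])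
      exact le_trans (min_le_left _ _) this
  have hSub : Subadditive u := hsub
  refine ⟨hSub.lim, ?_⟩
  intro x
  have hmain : Tendsto (fun k : ℕ => u k / k) atTop (nhds hSub.lim) :=
    hSub.tendsto_lim hbdd
  have hzero_top : Tendsto (fun k : ℕ => topV x / k) atTop (nhds 0) :=
    tendsto_const_div_atTop_nhds_zero_nat _
  have hzero_bot : Tendsto (fun k : ℕ => botV x / k) atTop (nhds 0) :=
    tendsto_const_div_atTop_nhds_zero_nat _
  have hupper : Tendsto (fun k : ℕ => (u k + topV x) / k) atTop (nhds hSub.lim) := by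
    have := hmain.add hzero_top
    rw [add_zero] at this
    refine this.congr fun k => ?_
    rw [add_div]
  have hlower : Tendsto (fun k : ℕ => (u k + botV x) / k) atTop (nhds hSub.lim) := by
    have := hmain.add hzero_bot
    rw [add_zero] at this
    refine this.congr fun k => ?_
    rw [add_div]
  refine tendsto_of_tendsto_of_tendsto_of_le_of_le' hlower hupper ?_ ?_
  · filter_upwards [eventually_ge_atTop 1] with k hk
    have hkpos : (0 : ℝ) ≤ (k : ℝ) := Nat.cast_nonneg k
    have h1 : u k + botV x ≤ topV (f^[k] x) := by
      have := htop_mono _ _ (hkey_ge k x)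
      rwa [htop_add] at this
    exact div_le_div_of_nonneg_right h1 (Nat.cast_nonneg k)
  · filter_upwards [eventually_ge_atTop 1] with k hk
    have h1 : topV (f^[k] x) ≤ u k + topV x := by
      have := htop_mono _ _ (hkey_le k x)
      rwa [htop_add] at this
    exact div_le_div_of_nonneg_right h1 (Nat.cast_nonneg k)
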